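/- For real a < 0 with i ≥ 2 − a (i a positive integer, i ≤ n), there exist constants C₁, C₂ > 0 depending only on a such that C₁·(i/n)^a ≤ E[U_{(i)}^a] ≤ C₂·(i/n)^a, where U_{(i)} ~ Beta(i, n+1−i). -/

import Mathlib

open MeasureTheory Real Set

lemma beta_eval (p : ℝ) (hp : 0 < p) (k : ℕ) :
    ∫ u in Set.Ioo (0:ℝ) 1, u ^ (p-1) * (1-u)^k
      = k.factorial / ∏ j ∈ Finset.range (k+1), (p + j) := by
  have hre : 0 < Complex.re (p : ℂ) := by simpa using hp
  have hB := Complex.betaIntegral_eval_nat_add_one_right hre k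
  have h1 : Complex.betaIntegral (p : ℂ) (k+1)
      = ((∫ u in Set.Ioo (0:ℝ) 1, u ^ (p-1) * (1-u)^k : ℝ) : ℂ) := by
    rw [Complex.betaIntegral, intervalIntegral.integral_of_le zero_le_one,
      MeasureTheory.integral_Ioc_eq_integral_Ioo]
    have heq : ∀ x ∈ Set.Ioo (0:ℝ) 1,
        (x : ℂ) ^ ((p:ℂ) - 1) * (1 - (x:ℂ)) ^ ((k:ℂ) + 1 - 1)
          = ((x ^ (p-1) * (1-x)^k : ℝ) : ℂ) := by
      intro x hx
      have e1 : ((p:ℂ) - 1) = ((p - 1 : ℝ) : ℂ) := by push_cast; ring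
      have e2 : ((k:ℂ) + 1 - 1) = ((k : ℕ) : ℂ) := by ring
      rw [e1, e2, ← Complex.ofReal_cpow hx.1.le, Complex.cpow_natCast]
      push_cast
      ring
    rw [setIntegral_congr_fun measurableSet_Ioo heq]
    exact integral_ofReal
  rw [h1] at hB
  have h2 : ((k.factorial : ℂ)) / ∏ j ∈ Finset.range (k+1), ((p:ℂ) + j)
      = ((k.factorial / ∏ j ∈ Finset.range (k+1), (p + j) : ℝ) : ℂ) := by
    push_cast
    ring
  rw [h2] at hB
  exact_mod_cast hB


lemma prod_telescope (c : ℝ) (hc : 0 < c) (m : ℕ) :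
    ∏ j ∈ Finset.range m, ((c + j + 1)/(c + j)) = (c + m)/c := by
  induction m with
  | zero => simp [div_self hc.ne']
  | succ m ih =>
    rw [Finset.prod_range_succ, ih]
    have h1 : c + (m:ℝ) > 0 := by positivity
    push_cast
    field_simp
    ring

lemma fact_prod (i k : ℕ) (hi : 1 ≤ i) :
    (i-1).factorial * ∏ j ∈ Finset.range (k+1), (i+j) = (i+k).factorial := by
  induction k with
  | zero =>
    obtain ⟨m, rfl⟩ := Nat.exists_eq_add_of_le hi
    simp [Nat.factorial_succ, Nat.mul_comm, Nat.add_comm]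
  | succ k ih =>
    rw [Finset.prod_range_succ, ← Nat.mul_assoc, ih]
    rw [show i + (k+1) = (i+k) + 1 by ring, Nat.factorial_succ]
    ring

lemma factor_lb (a x : ℝ) (ha : a < 0) (hx : 2 - a ≤ x) :
    ((x+1)/x) ^ (-a) ≤ x/(x+a) := by
  have hx0 : 0 < x := by linarith
  have hxa : 0 < x + a := by linarith
  have h1 : 0 < (x+1)/x := by positivity
  rw [Real.rpow_def_of_pos h1]
  have hlog : Real.log ((x+1)/x) ≤ 1/x := by
    have := Real.log_le_sub_one_of_pos h1
    have : (x+1)/x - 1 = 1/x := by field_simp; ring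
    linarith [Real.log_le_sub_one_of_pos h1]
  have h2 : Real.exp (Real.log ((x+1)/x) * -a) ≤ Real.exp ((1/x) * -a) := by
    apply Real.exp_le_exp.2
    apply mul_le_mul_of_nonneg_right hlog (by linarith)
  refine h2.trans ?_
  have h3 : (x+a)/x ≤ Real.exp (a/x) := by
    have := Real.add_one_le_exp (a/x)
    have e : (x+a)/x = a/x + 1 := by field_simp; ring
    linarith
  have h4 : Real.exp ((1/x) * -a) = (Real.exp (a/x))⁻¹ := by
    rw [← Real.exp_neg]; congr 1; field_simp
  rw [h4]
  have h5 : x/(x+a) = ((x+a)/x)⁻¹ := by rw [inv_div]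
  rw [h5]
  exact inv_anti₀ (by positivity) h3

lemma factor_ub (a x : ℝ) (ha : a < 0) (hx : 2 - a ≤ x) :
    x/(x+a) ≤ ((x+a)/(x+a-1)) ^ (-a) := by
  have hy : 0 < x + a := by linarith
  have hy1 : 0 < x + a - 1 := by linarith
  have h1 : 0 < (x+a)/(x+a-1) := by positivity
  rw [Real.rpow_def_of_pos h1]
  have hlog : 1/(x+a) ≤ Real.log ((x+a)/(x+a-1)) := by
    have h2 : Real.log ((x+a-1)/(x+a)) ≤ (x+a-1)/(x+a) - 1 :=
      Real.log_le_sub_one_of_pos (by positivity)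
    have e1 : Real.log ((x+a-1)/(x+a)) = - Real.log ((x+a)/(x+a-1)) := by
      rw [← Real.log_inv]
      congr 1
      field_simp
    have e2 : (x+a-1)/(x+a) - 1 = -(1/(x+a)) := by field_simp; ring
    rw [e1, e2] at h2
    linarith
  have h2 : Real.exp ((1/(x+a)) * -a) ≤ Real.exp (Real.log ((x+a)/(x+a-1)) * -a) := by
    apply Real.exp_le_exp.2
    apply mul_le_mul_of_nonneg_right hlog (by linarith)
  refine le_trans ?_ h2
  have h3 : x/(x+a) = 1 + (-a)/(x+a) := by field_simp; ring
  rw [h3]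
  have := Real.add_one_le_exp ((-a)/(x+a))
  calc 1 + (-a)/(x+a) = (-a)/(x+a) + 1 := by ring
    _ ≤ Real.exp ((-a)/(x+a)) := Real.add_one_le_exp _
    _ = Real.exp ((1/(x+a)) * -a) := by congr 1; ring

lemma prod_lb (a : ℝ) (ha : a < 0) (i k : ℕ) (hi : 2 - a ≤ (i:ℝ)) :
    (((i:ℝ)+k+1)/i) ^ (-a) ≤ ∏ j ∈ Finset.range (k+1), (((i:ℝ)+j)/((i:ℝ)+a+j)) := by
  have hi0 : (0:ℝ) < i := by linarith
  have step : ∀ j ∈ Finset.range (k+1),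
      (((i:ℝ)+j+1)/((i:ℝ)+j)) ^ (-a) ≤ ((i:ℝ)+j)/((i:ℝ)+a+j) := by
    intro j _
    have hj : (0:ℝ) ≤ j := Nat.cast_nonneg j
    have h := factor_lb a ((i:ℝ)+j) ha (by linarith)
    calc (((i:ℝ)+j+1)/((i:ℝ)+j)) ^ (-a)
        = ((((i:ℝ)+j)+1)/((i:ℝ)+j)) ^ (-a) := by ring_nf
      _ ≤ ((i:ℝ)+j)/(((i:ℝ)+j)+a) := h
      _ = ((i:ℝ)+j)/((i:ℝ)+a+j) := by ring_nf
  calc (((i:ℝ)+k+1)/i) ^ (-a)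
      = (∏ j ∈ Finset.range (k+1), (((i:ℝ)+j+1)/((i:ℝ)+j))) ^ (-a) := by
        rw [prod_telescope (i:ℝ) hi0 (k+1)]
        push_cast; ring_nf
    _ = ∏ j ∈ Finset.range (k+1), (((i:ℝ)+j+1)/((i:ℝ)+j)) ^ (-a) := by
        rw [Real.finset_prod_rpow _ _ (fun j _ => by positivity) (-a)]
    _ ≤ _ := Finset.prod_le_prod (fun j _ => by positivity) step

lemma prod_ub (a : ℝ) (ha : a < 0) (i k : ℕ) (hi : 2 - a ≤ (i:ℝ)) :
    ∏ j ∈ Finset.range (k+1), (((i:ℝ)+j)/((i:ℝ)+a+j))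
      ≤ (((i:ℝ)+a+k)/((i:ℝ)+a-1)) ^ (-a) := by
  have hc0 : (0:ℝ) < (i:ℝ)+a-1 := by linarith
  have step : ∀ j ∈ Finset.range (k+1),
      ((i:ℝ)+j)/((i:ℝ)+a+j) ≤ ((((i:ℝ)+a-1)+j+1)/(((i:ℝ)+a-1)+j)) ^ (-a) := by
    intro j _
    have hj : (0:ℝ) ≤ j := Nat.cast_nonneg j
    have h := factor_ub a ((i:ℝ)+j) ha (by linarith)
    calc ((i:ℝ)+j)/((i:ℝ)+a+j) = ((i:ℝ)+j)/(((i:ℝ)+j)+a) := by ring_nf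
      _ ≤ ((((i:ℝ)+j)+a)/(((i:ℝ)+j)+a-1)) ^ (-a) := h
      _ = ((((i:ℝ)+a-1)+j+1)/(((i:ℝ)+a-1)+j)) ^ (-a) := by ring_nf
  calc ∏ j ∈ Finset.range (k+1), (((i:ℝ)+j)/((i:ℝ)+a+j))
      ≤ ∏ j ∈ Finset.range (k+1), ((((i:ℝ)+a-1)+j+1)/(((i:ℝ)+a-1)+j)) ^ (-a) := by
        refine Finset.prod_le_prod (fun j _ => ?_) step
        have hj : (0:ℝ) ≤ j := Nat.cast_nonneg j
        apply div_nonneg <;> linarith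
    _ = (∏ j ∈ Finset.range (k+1), ((((i:ℝ)+a-1)+j+1)/(((i:ℝ)+a-1)+j))) ^ (-a) :=
        Real.finset_prod_rpow _ _ (fun j _ => by positivity) (-a)
    _ = (((i:ℝ)+a+k)/((i:ℝ)+a-1)) ^ (-a) := by
        rw [prod_telescope ((i:ℝ)+a-1) hc0 (k+1)]
        push_cast; ring_nf


/-- Two-sided bounds on the moments of uniform order statistics: for `a < 0` there are
constants `C₁, C₂ > 0` depending only on `a` with
`C₁ (i/n)^a ≤ E[U_{(i)}^a] ≤ C₂ (i/n)^a` whenever `i ≥ 2 − a`. -/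
theorem stmt_13
    (a : ℝ) (ha : a < 0) :
    ∃ C₁ > (0 : ℝ), ∃ C₂ > (0 : ℝ), ∀ n i : ℕ, 1 ≤ i → i ≤ n → (2 : ℝ) - a ≤ (i : ℝ) →
      C₁ * ((i : ℝ) / (n : ℝ)) ^ a
        ≤ ∫ u in Set.Ioo (0 : ℝ) 1,
            u ^ a * (u ^ (i - 1) * (1 - u) ^ (n - i) *
              ((n.factorial : ℝ) / ((i - 1).factorial * (n - i).factorial)))
      ∧ ∫ u in Set.Ioo (0 : ℝ) 1,
            u ^ a * (u ^ (i - 1) * (1 - u) ^ (n - i) *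
              ((n.factorial : ℝ) / ((i - 1).factorial * (n - i).factorial)))
        ≤ C₂ * ((i : ℝ) / (n : ℝ)) ^ a := by
  refine ⟨1, one_pos, (2-a) ^ (-a), Real.rpow_pos_of_pos (by linarith) _, ?_⟩
  intro n i hi1 hin hi2
  set k := n - i with hk
  have hkc : (k:ℝ) = (n:ℝ) - i := by
    rw [hk, Nat.cast_sub hin]
  have hi0 : (2:ℝ) < i := by linarith
  have hni : (i:ℝ) ≤ n := Nat.cast_le.2 hin
  have hn0 : (0:ℝ) < n := by linarith
  have hp0 : (0:ℝ) < (i:ℝ) + a := by linarith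
  set C : ℝ := (n.factorial : ℝ) / ((i - 1).factorial * (n - i).factorial) with hC
  -- evaluate the integral
  have hEq : (∫ u in Set.Ioo (0 : ℝ) 1,
      u ^ a * (u ^ (i - 1) * (1 - u) ^ (n - i) * C))
      = ∏ j ∈ Finset.range (k+1), (((i:ℝ)+j)/((i:ℝ)+a+j)) := by
    have h1 : (∫ u in Set.Ioo (0 : ℝ) 1,
        u ^ a * (u ^ (i - 1) * (1 - u) ^ (n - i) * C))
        = ∫ u in Set.Ioo (0 : ℝ) 1, (u ^ ((i:ℝ)+a-1) * (1-u)^k) * C := by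
      refine setIntegral_congr_fun measurableSet_Ioo (fun u hu => ?_)
      have hu0 : 0 < u := hu.1
      have e1 : u ^ a * u ^ (i-1) = u ^ ((i:ℝ)+a-1) := by
        rw [← Real.rpow_natCast u (i-1), ← Real.rpow_add hu0]
        congr 1
        rw [Nat.cast_sub hi1]
        push_cast
        ring
      calc u ^ a * (u ^ (i - 1) * (1 - u) ^ (n - i) * C)
          = (u ^ a * u ^ (i-1)) * (1-u)^(n-i) * C := by ring
        _ = (u ^ ((i:ℝ)+a-1) * (1-u)^k) * C := by rw [e1, hk]
    rw [h1, integral_mul_const, beta_eval ((i:ℝ)+a) hp0 k]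
    -- now algebra
    have hfact : ((n.factorial : ℝ)) = (i-1).factorial * ∏ j ∈ Finset.range (k+1), ((i:ℝ)+j) := by
      have h2 := fact_prod i k hi1
      rw [Nat.add_sub_cancel' hin] at h2
      calc ((n.factorial : ℝ)) = (((i - 1).factorial * ∏ j ∈ Finset.range (k+1), (i+j) : ℕ) : ℝ) := by
            rw [h2]
        _ = (i-1).factorial * ∏ j ∈ Finset.range (k+1), ((i:ℝ)+j) := by push_cast; ring
    have hprodpos : 0 < ∏ j ∈ Finset.range (k+1), ((i:ℝ)+a+j) := by
      refine Finset.prod_pos (fun j _ => ?_)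
      have hj : (0:ℝ) ≤ j := Nat.cast_nonneg j
      linarith
    have hf1 : (0:ℝ) < (i-1).factorial := by positivity
    have hf2 : (0:ℝ) < (k.factorial : ℝ) := by positivity
    rw [Finset.prod_div_distrib, hC, hfact, hk]
    field_simp
  rw [hEq]
  constructor
  · -- lower bound
    have h3 : ((i:ℝ)/n) ^ a = ((n:ℝ)/i) ^ (-a) := by
      rw [Real.rpow_neg (by positivity), ← Real.inv_rpow (by positivity), inv_div]
    rw [one_mul, h3]
    refine le_trans ?_ (prod_lb a ha i k hi2)
    apply Real.rpow_le_rpow (by positivity) ?_ (by linarith)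
    rw [hkc]
    apply div_le_div_of_nonneg_right ?_ (by linarith)
    linarith
  · -- upper bound
    refine le_trans (prod_ub a ha i k hi2) ?_
    have key : ((i:ℝ)+a+k)/((i:ℝ)+a-1) ≤ (2-a) * ((n:ℝ)/i) := by
      rw [hkc]
      rw [div_le_iff₀ (by linarith)]
      have h4 : (2-a) * ((n:ℝ)/i) * ((i:ℝ)+a-1) = (2-a)*((i:ℝ)+a-1)/i * n := by ring
      rw [h4]
      have h5 : (1:ℝ) ≤ (2-a)*((i:ℝ)+a-1)/i := by
        rw [le_div_iff₀ (by linarith)]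
        nlinarith
      nlinarith
    have h6 : ((i:ℝ)/n) ^ a = ((n:ℝ)/i) ^ (-a) := by
      rw [Real.rpow_neg (by positivity), ← Real.inv_rpow (by positivity), inv_div]
    rw [h6, ← Real.mul_rpow (by linarith) (by positivity)]
    apply Real.rpow_le_rpow ?_ key (by linarith)
    have hj : (0:ℝ) ≤ k := Nat.cast_nonneg k
    apply div_nonneg <;> linarith
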